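/- Localization of the continuous-time temporal PageRank: for each t, if P(t) is row-stochastic, λ(t) ∈ (0,1), v(t) is a probability vector, and π(t) is the unique normalized positive vector with π(t)^T G(t) = π(t)^T where G(t) = λ(t)P(t) + (1−λ(t))e v(t)^T, then for every node i, min_j (X(t))_{ji} ≤ π_i(t) ≤ (X(t))_{ii}, where X(t) = (1−λ(t))(Id − λ(t)P(t))^{-1}. -/
import Mathlib


theorem stmt_15 (n : ℕ) (P : Matrix (Fin n) (Fin n) ℝ)
    (hnonneg : ∀ i j, 0 ≤ P i j) (hrow : ∀ i, ∑ j, P i j = 1)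
    (l : ℝ) (hl0 : 0 < l) (hl1 : l < 1)
    (v : Fin n → ℝ) (hv : ∀ i, 0 < v i) (hv1 : ∑ i, v i = 1)
    (G : Matrix (Fin n) (Fin n) ℝ)
    (hG : ∀ i j, G i j = l * P i j + (1 - l) * v j)
    (π : Fin n → ℝ) (hπpos : ∀ i, 0 < π i) (hπ1 : ∑ i, π i = 1)
    (hfix : Matrix.vecMul π G = π)
    (X : Matrix (Fin n) (Fin n) ℝ) (hX : X = (1 - l) • (1 - l • P)⁻¹) :
    ∀ i : Fin n,
      Finset.univ.inf' ⟨i, Finset.mem_univ i⟩ (fun j => X j i) ≤ π i ∧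
      π i ≤ X i i := by
  intro i
  set A : Matrix (Fin n) (Fin n) ℝ := 1 - l • P with hAdef
  have hPle1 : ∀ j k, P j k ≤ 1 := by
    intro j k
    calc P j k ≤ ∑ m, P j m :=
          Finset.single_le_sum (fun m _ => hnonneg j m) (Finset.mem_univ k)
      _ = 1 := hrow j
  have hAapp : ∀ j k, A j k = (if j = k then (1:ℝ) else 0) - l * P j k := by
    intro j k
    simp [hAdef, Matrix.sub_apply, Matrix.one_apply, Matrix.smul_apply]
  have hdet : A.det ≠ 0 := by
    apply det_ne_zero_of_sum_row_lt_diag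
    intro k
    have hkk : A k k = 1 - l * P k k := by rw [hAapp]; simp
    have hlPkk : l * P k k ≤ l := by nlinarith [hnonneg k k, hPle1 k k]
    have h1 : ∑ j ∈ Finset.univ.erase k, ‖A k j‖
        = l * (1 - P k k) := by
      have : ∀ j ∈ Finset.univ.erase k, ‖A k j‖ = l * P k j := by
        intro j hj
        have hjk : k ≠ j := fun h => (Finset.mem_erase.mp hj).1 h.symm
        rw [hAapp]
        rw [if_neg hjk]
        rw [zero_sub, norm_neg]
        have : 0 ≤ l * P k j := mul_nonneg hl0.le (hnonneg k j)
        rw [Real.norm_eq_abs, abs_of_nonneg this]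
      rw [Finset.sum_congr rfl this]
      rw [← Finset.mul_sum]
      congr 1
      have := Finset.sum_erase_eq_sub (f := fun j => P k j) (Finset.mem_univ k)
      rw [this, hrow k]
    have h2 : ‖A k k‖ = 1 - l * P k k := by
      rw [hkk, Real.norm_eq_abs, abs_of_nonneg (by linarith)]
    rw [h1, h2]
    nlinarith [hnonneg k k, hPle1 k k]
  set Y : Matrix (Fin n) (Fin n) ℝ := A⁻¹ with hYdef
  have hAY : A * Y = 1 := Matrix.mul_nonsing_inv A (isUnit_iff_ne_zero.mpr hdet)
  -- the renewal equation for the column u := Y · i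
  have hEq : ∀ m j : Fin n,
      Y j m = (if j = m then (1:ℝ) else 0) + l * ∑ k, P j k * Y k m := by
    intro m j
    have := congrFun (congrFun hAY j) m
    rw [Matrix.mul_apply] at this
    have hsum : ∑ k, A j k * Y k m
        = Y j m - l * ∑ k, P j k * Y k m := by
      simp only [hAapp, sub_mul, ite_mul, one_mul, zero_mul]
      rw [Finset.sum_sub_distrib, Finset.sum_ite_eq, if_pos (Finset.mem_univ j),
        Finset.mul_sum]
      ring_nf
    rw [hsum, Matrix.one_apply] at this
    linarith [this]
  -- nonnegativity of columns of Y
  have hYnonneg : ∀ m j : Fin n, 0 ≤ Y j m := by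
    intro m
    obtain ⟨j1, -, hj1⟩ := Finset.exists_min_image Finset.univ (fun j => Y j m)
      ⟨i, Finset.mem_univ i⟩
    have hmin : ∀ j, Y j1 m ≤ Y j m := fun j => hj1 j (Finset.mem_univ j)
    have hPsum : Y j1 m ≤ ∑ k, P j1 k * Y k m := by
      calc Y j1 m = ∑ k, P j1 k * Y j1 m := by
            rw [← Finset.sum_mul, hrow j1, one_mul]
        _ ≤ ∑ k, P j1 k * Y k m :=
            Finset.sum_le_sum fun k _ =>
              mul_le_mul_of_nonneg_left (hmin k) (hnonneg j1 k)
    have h1 : Y j1 m ≥ l * Y j1 m := by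
      have := hEq m j1
      have hge : Y j1 m ≥ 0 + l * ∑ k, P j1 k * Y k m := by
        rw [this]
        gcongr
        split <;> norm_num
      nlinarith
    have hj1nonneg : 0 ≤ Y j1 m := by nlinarith
    intro j
    exact le_trans hj1nonneg (hmin j)
  -- diagonal dominance of columns: Y j m ≤ Y m m
  have hYdiag : ∀ m j : Fin n, Y j m ≤ Y m m := by
    intro m j
    obtain ⟨j0, -, hj0⟩ := Finset.exists_max_image Finset.univ (fun j => Y j m)
      ⟨i, Finset.mem_univ i⟩
    have hmax : ∀ j, Y j m ≤ Y j0 m := fun j => hj0 j (Finset.mem_univ j)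
    have hYm1 : 1 ≤ Y m m := by
      have := hEq m m
      rw [if_pos rfl] at this
      have hsumnn : 0 ≤ ∑ k, P m k * Y k m :=
        Finset.sum_nonneg fun k _ => mul_nonneg (hnonneg m k) (hYnonneg m k)
      nlinarith
    by_cases hcase : j0 = m
    · exact le_trans (hmax j) (by rw [hcase])
    · exfalso
      have heq0 := hEq m j0
      rw [if_neg hcase] at heq0
      have hPsum : ∑ k, P j0 k * Y k m ≤ Y j0 m := by
        calc ∑ k, P j0 k * Y k m ≤ ∑ k, P j0 k * Y j0 m :=
              Finset.sum_le_sum fun k _ =>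
                mul_le_mul_of_nonneg_left (hmax k) (hnonneg j0 k)
          _ = Y j0 m := by rw [← Finset.sum_mul, hrow j0, one_mul]
      have h1 : Y j0 m ≤ l * Y j0 m := by
        rw [heq0, zero_add]
        nlinarith
      have h2 : Y j0 m ≤ 0 := by nlinarith
      have h3 : (1:ℝ) ≤ Y j0 m := le_trans hYm1 (hmax m)
      linarith
  -- π in terms of Y : π m = ∑ j, v j * ((1 - l) * Y j m)
  have hpiA : Matrix.vecMul π A = fun m => (1 - l) * v m := by
    funext m
    have hfm := congrFun hfix m
    rw [Matrix.vecMul, dotProduct] at hfm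
    have hGm : ∀ j, π j * G j m = l * (π j * P j m) + (1 - l) * v m * π j := by
      intro j; rw [hG j m]; ring
    rw [Finset.sum_congr rfl fun j _ => hGm j, Finset.sum_add_distrib,
      ← Finset.mul_sum, ← Finset.mul_sum, hπ1, mul_one] at hfm
    rw [Matrix.vecMul, dotProduct]
    have : ∀ j, π j * A j m = (if j = m then π j else 0) - l * (π j * P j m) := by
      intro j
      rw [hAapp]
      by_cases h : j = m <;> simp [h] <;> ring
    rw [Finset.sum_congr rfl fun j _ => this j, Finset.sum_sub_distrib,
      Finset.sum_ite_eq' Finset.univ m π, if_pos (Finset.mem_univ m), ← Finset.mul_sum]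
    linarith
  have hpiY : ∀ m, π m = ∑ j, (1 - l) * v j * Y j m := by
    intro m
    have h1 : Matrix.vecMul (Matrix.vecMul π A) Y = π := by
      rw [Matrix.vecMul_vecMul, hAY, Matrix.vecMul_one]
    have h2 := congrFun h1 m
    rw [hpiA] at h2
    rw [← h2, Matrix.vecMul, dotProduct]
  have hXY : ∀ j m, X j m = (1 - l) * Y j m := by
    intro j m
    rw [hX]
    simp [hYdef, hAdef, Matrix.smul_apply]
  have hpiX : ∀ m, π m = ∑ j, v j * X j m := by
    intro m
    rw [hpiY m]
    exact Finset.sum_congr rfl fun j _ => by rw [hXY]; ring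
  constructor
  · -- lower bound
    rw [hpiX i]
    have hinf : ∀ j, Finset.univ.inf' ⟨i, Finset.mem_univ i⟩ (fun j => X j i) ≤ X j i :=
      fun j => Finset.inf'_le _ (Finset.mem_univ j)
    calc Finset.univ.inf' ⟨i, Finset.mem_univ i⟩ (fun j => X j i)
        = ∑ j, v j * Finset.univ.inf' ⟨i, Finset.mem_univ i⟩ (fun j => X j i) := by
          rw [← Finset.sum_mul, hv1, one_mul]
      _ ≤ ∑ j, v j * X j i :=
          Finset.sum_le_sum fun j _ =>
            mul_le_mul_of_nonneg_left (hinf j) (hv j).le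
  · -- upper bound
    rw [hpiX i]
    calc ∑ j, v j * X j i ≤ ∑ j, v j * X i i := by
          refine Finset.sum_le_sum fun j _ => mul_le_mul_of_nonneg_left ?_ (hv j).le
          rw [hXY, hXY]
          have := hYdiag i j
          nlinarith
      _ = X i i := by rw [← Finset.sum_mul, hv1, one_mul]
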